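/- Let G be a connected locally finite infinite graph with constant vertex weight ω₀ > 0 and positive conductance c. Then the Laplacian Δ_{ω₀,c} with domain the finitely supported functions C₀(V) ⊂ ℓ²(V) is essentially self-adjoint; equivalently, the only ℓ²(V) solution g of Δ_{ω₀,c} g + g = 0 is g ≡ 0. -/

import Mathlib

open Finset

variable {V : Type*}

/-- Weighted Laplacian: `(Δ_{ω,c} f)(x) = (1/ω_x²) Σ_{y∼x} c_{xy}(f(x) − f(y))`. -/
noncomputable def lapW (G : SimpleGraph V) [∀ x : V, Fintype (G.neighborSet x)]
    (ω : V → ℝ) (c : V → V → ℝ) (f : V → ℝ) (x : V) : ℝ :=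
  (1 / (ω x) ^ 2) * ∑ y ∈ G.neighborFinset x, c x y * (f x - f y)

/-- Schrödinger operator: `(Δ_{1,a} + W) f (x) = Σ_{y∼x} a_{xy}(f(x) − f(y)) + W(x) f(x)`. -/
noncomputable def schrod (G : SimpleGraph V) [∀ x : V, Fintype (G.neighborSet x)]
    (a : V → V → ℝ) (W : V → ℝ) (f : V → ℝ) (x : V) : ℝ :=
  (∑ y ∈ G.neighborFinset x, a x y * (f x - f y)) + W x * f x

lemma aux_nonpos (G : SimpleGraph V) [∀ x : V, Fintype (G.neighborSet x)]
    (ω₀ : ℝ) (hω : 0 < ω₀)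
    (c : V → V → ℝ) (hc : ∀ x y, G.Adj x y → 0 < c x y)
    (g : V → ℝ) (hsum : Summable (fun x => ω₀ ^ 2 * (g x) ^ 2))
    (heq : ∀ x, lapW G (fun _ => ω₀) c g x + g x = 0) :
    ∀ x, g x ≤ 0 := by
  by_contra h
  push_neg at h
  obtain ⟨x, hx⟩ := h
  set M := g x with hM
  have hsq : Summable (fun y => (g y) ^ 2) := by
    have h2 := hsum.mul_left (ω₀ ^ 2)⁻¹
    have hne : (ω₀ : ℝ) ^ 2 ≠ 0 := pow_ne_zero 2 hω.ne'
    simpa [inv_mul_cancel_left₀ hne] using h2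
  have htend := hsq.tendsto_cofinite_zero
  have hev : ∀ᶠ y in Filter.cofinite, (g y) ^ 2 < M ^ 2 :=
    htend.eventually_lt_const (by positivity)
  have hfin : {y | M ≤ g y}.Finite := by
    refine (Filter.eventually_cofinite.mp hev).subset ?_
    intro y hy
    simp only [Set.mem_setOf_eq] at hy ⊢
    have : M ^ 2 ≤ (g y) ^ 2 := pow_le_pow_left₀ hx.le hy 2
    linarith
  have hxmem : x ∈ hfin.toFinset := by simp [hM]
  obtain ⟨x₀, hx₀s, hx₀max⟩ := hfin.toFinset.exists_max_image g ⟨x, hxmem⟩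
  have hx₀M : M ≤ g x₀ := by
    have := Set.Finite.mem_toFinset hfin |>.mp hx₀s
    exact this
  have hmax : ∀ y, g y ≤ g x₀ := by
    intro y
    by_cases hy : y ∈ hfin.toFinset
    · exact hx₀max y hy
    · have : ¬ M ≤ g y := by simpa using hy
      linarith
  have hlap : 0 ≤ lapW G (fun _ => ω₀) c g x₀ := by
    unfold lapW
    apply mul_nonneg
    · positivity
    · apply Finset.sum_nonneg
      intro y hy
      have hadj : G.Adj x₀ y := (SimpleGraph.mem_neighborFinset G x₀ y).mp hy
      have := hc x₀ y hadj
      have := hmax y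
      nlinarith
  have := heq x₀
  linarith

/-- with constant vertex weight `ω₀ > 0`, the Laplacian `Δ_{ω₀,c}` is
essentially self-adjoint on `C₀(V)`: the only `ℓ²` solution of `Δ_{ω₀,c} g + g = 0`
is `g ≡ 0`. -/
theorem stmt2 (G : SimpleGraph V) [∀ x : V, Fintype (G.neighborSet x)]
    (hG : G.Connected) [Infinite V]
    (ω₀ : ℝ) (hω : 0 < ω₀)
    (c : V → V → ℝ) (hc : ∀ x y, G.Adj x y → 0 < c x y)
    (hcs : ∀ x y, c x y = c y x) :
    ∀ g : V → ℝ, Summable (fun x => ω₀ ^ 2 * (g x) ^ 2) →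
      (∀ x, lapW G (fun _ => ω₀) c g x + g x = 0) → g = 0 := by
  intro g hsum heq
  have h1 : ∀ x, g x ≤ 0 := aux_nonpos G ω₀ hω c hc g hsum heq
  have hneg : ∀ x, lapW G (fun _ => ω₀) c (fun y => -g y) x + (-g x) = 0 := by
    intro x
    have hlin : lapW G (fun _ => ω₀) c (fun y => -g y) x
        = -(lapW G (fun _ => ω₀) c g x) := by
      unfold lapW
      rw [← mul_neg, ← Finset.sum_neg_distrib]
      congr 1
      apply Finset.sum_congr rfl
      intro y _
      ring
    rw [hlin]
    have := heq x
    linarith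
  have hsum2 : Summable (fun x => ω₀ ^ 2 * ((-g x) : ℝ) ^ 2) := by
    simpa using hsum
  have h2 : ∀ x, -g x ≤ 0 := aux_nonpos G ω₀ hω c hc (fun y => -g y) hsum2 hneg
  funext x
  have := h1 x
  have := h2 x
  simp only [Pi.zero_apply]
  linarith
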